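/- Let n ≥ 1, let u ∈ ℝⁿ, and let λ = (λ¹, λ², λ³) ∈ ℝ³. For x = (x¹, x², x³) ∈ (ℝⁿ)³ set sᵢ(x) = ⟨xⁱ, u⟩ − λⁱ for i = 1,2,3 and r(x) = (s₁(x)² + s₂(x)² + s₃(x)²)^{1/2}, and define F(x) = s₁(x)·ln(s₁(x) + r(x)) − r(x) on Ω = {x ∈ (ℝⁿ)³ : s₁(x) + r(x) > 0}. Then F is polyharmonic: for every a = (a¹,a²,a³) ∈ (ℝⁿ)³ and every v ∈ ℝⁿ, the function ξ = (ξ₁,ξ₂,ξ₃) ↦ F(a¹ + ξ₁v, a² + ξ₂v, a³ + ξ₃v) is harmonic (as a function of ξ ∈ ℝ³) on the open set of ξ where it is defined. -/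

import Mathlib

open scoped BigOperators

/-- The Laplacian of `f : ℝ³ → ℝ` at a point, computed as the sum of the second
directional derivatives along the standard orthonormal basis. -/
noncomputable def laplacian3 (f : EuclideanSpace ℝ (Fin 3) → ℝ)
    (x : EuclideanSpace ℝ (Fin 3)) : ℝ :=
  ∑ i : Fin 3,
    fderiv ℝ (fun y => fderiv ℝ f y (EuclideanSpace.single i 1)) x (EuclideanSpace.single i 1)

/-- `f` is harmonic on `s`: it is `C²` there and its Laplacian vanishes on `s`. -/
def HarmonicOn3 (f : EuclideanSpace ℝ (Fin 3) → ℝ) (s : Set (EuclideanSpace ℝ (Fin 3))) : Prop :=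
  ContDiffOn ℝ 2 f s ∧ ∀ x ∈ s, laplacian3 f x = 0

noncomputable section
namespace FB

abbrev E3 := EuclideanSpace ℝ (Fin 3)

def tt (c : ℝ) (b : Fin 3 → ℝ) (i : Fin 3) (ξ : E3) : ℝ := b i + c * ξ i
def QQ (c : ℝ) (b : Fin 3 → ℝ) (ξ : E3) : ℝ := ∑ i : Fin 3, tt c b i ξ ^ 2
def RR (c : ℝ) (b : Fin 3 → ℝ) (ξ : E3) : ℝ := Real.sqrt (QQ c b ξ)
def MM (c : ℝ) (b : Fin 3 → ℝ) (ξ : E3) : ℝ := tt c b 0 ξ + RR c b ξ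
def GG (c : ℝ) (b : Fin 3 → ℝ) (ξ : E3) : ℝ :=
  tt c b 0 ξ * Real.log (MM c b ξ) - RR c b ξ

def DQ (c : ℝ) (b : Fin 3 → ℝ) (ξ : E3) : E3 →L[ℝ] ℝ :=
  ∑ i : Fin 3, (2 * c * tt c b i ξ) • EuclideanSpace.proj i
def DR (c : ℝ) (b : Fin 3 → ℝ) (ξ : E3) : E3 →L[ℝ] ℝ :=
  (1 / (2 * RR c b ξ)) • DQ c b ξ
def DM (c : ℝ) (b : Fin 3 → ℝ) (ξ : E3) : E3 →L[ℝ] ℝ :=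
  c • (EuclideanSpace.proj 0 : E3 →L[ℝ] ℝ) + DR c b ξ
def DG (c : ℝ) (b : Fin 3 → ℝ) (ξ : E3) : E3 →L[ℝ] ℝ :=
  tt c b 0 ξ • ((MM c b ξ)⁻¹ • DM c b ξ)
    + Real.log (MM c b ξ) • (c • (EuclideanSpace.proj 0 : E3 →L[ℝ] ℝ)) - DR c b ξ

variable (c : ℝ) (b : Fin 3 → ℝ) (ξ : E3)

lemma abs_t_le_R (i : Fin 3) : |tt c b i ξ| ≤ RR c b ξ := by
  rw [← Real.sqrt_sq_eq_abs, RR]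
  exact Real.sqrt_le_sqrt (Finset.single_le_sum (f := fun i => tt c b i ξ ^ 2)
    (fun j _ => sq_nonneg _) (Finset.mem_univ i))

lemma R_pos (h : 0 < MM c b ξ) : 0 < RR c b ξ := by
  have h1 := abs_t_le_R c b ξ 0
  have h2 : tt c b 0 ξ ≤ |tt c b 0 ξ| := le_abs_self _
  have := h
  rw [MM] at this
  linarith

lemma Q_pos (h : 0 < MM c b ξ) : 0 < QQ c b ξ := by
  have := R_pos c b ξ h
  rw [RR] at this
  exact Real.sqrt_pos.mp this

lemma hasFDerivAt_t (i : Fin 3) :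
    HasFDerivAt (tt c b i) (c • (EuclideanSpace.proj i : E3 →L[ℝ] ℝ)) ξ := by
  have h : HasFDerivAt (fun ξ : E3 => ξ i) (EuclideanSpace.proj i : E3 →L[ℝ] ℝ) ξ :=
    (EuclideanSpace.proj i : E3 →L[ℝ] ℝ).hasFDerivAt
  exact (h.const_mul c).const_add (b i)

lemma hasFDerivAt_Q : HasFDerivAt (QQ c b) (DQ c b ξ) ξ := by
  have hQeq : QQ c b = fun y => ∑ i : Fin 3, tt c b i y * tt c b i y := by
    funext y; simp [QQ, sq]
  rw [hQeq]
  have h1 : HasFDerivAt (fun y : E3 => ∑ i : Fin 3, tt c b i y * tt c b i y)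
      (∑ i : Fin 3, (tt c b i ξ • (c • (EuclideanSpace.proj i : E3 →L[ℝ] ℝ))
        + tt c b i ξ • (c • (EuclideanSpace.proj i : E3 →L[ℝ] ℝ)))) ξ := by
    have := HasFDerivAt.fun_sum (u := Finset.univ)
      (fun i _ => (hasFDerivAt_t c b ξ i).mul (hasFDerivAt_t c b ξ i))
    simpa using this
  convert h1 using 1
  ext y
  simp only [DQ, ContinuousLinearMap.sum_apply, ContinuousLinearMap.smul_apply,
    ContinuousLinearMap.add_apply, smul_eq_mul]
  exact Finset.sum_congr rfl fun i _ => by ring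

lemma hasFDerivAt_R (h : 0 < MM c b ξ) : HasFDerivAt (RR c b) (DR c b ξ) ξ := by
  have hQ := hasFDerivAt_Q c b ξ
  exact (Real.hasDerivAt_sqrt (Q_pos c b ξ h).ne').comp_hasFDerivAt ξ hQ

lemma hasFDerivAt_M (h : 0 < MM c b ξ) : HasFDerivAt (MM c b) (DM c b ξ) ξ :=
  (hasFDerivAt_t c b ξ 0).add (hasFDerivAt_R c b ξ h)

lemma hasFDerivAt_logM (h : 0 < MM c b ξ) :
    HasFDerivAt (fun y => Real.log (MM c b y)) ((MM c b ξ)⁻¹ • DM c b ξ) ξ :=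
  (Real.hasDerivAt_log h.ne').comp_hasFDerivAt ξ (hasFDerivAt_M c b ξ h)

lemma hasFDerivAt_G (h : 0 < MM c b ξ) : HasFDerivAt (GG c b) (DG c b ξ) ξ :=
  ((hasFDerivAt_t c b ξ 0).mul (hasFDerivAt_logM c b ξ h)).sub (hasFDerivAt_R c b ξ h)

lemma DR_apply (j : Fin 3) (h : 0 < MM c b ξ) :
    DR c b ξ (EuclideanSpace.single j 1) = c * tt c b j ξ / RR c b ξ := by
  have hR := (R_pos c b ξ h).ne'
  simp only [DR, DQ, ContinuousLinearMap.smul_apply, ContinuousLinearMap.sum_apply,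
    smul_eq_mul, PiLp.proj_apply, EuclideanSpace.single_apply]
  rw [Finset.sum_eq_single j]
  · field_simp; simp
  · intro i _ hij; simp [hij]
  · intro hj; simp at hj

lemma proj0_single (j : Fin 3) :
    (EuclideanSpace.proj 0 : E3 →L[ℝ] ℝ) (EuclideanSpace.single j 1)
      = if (0:Fin 3) = j then (1:ℝ) else 0 := by
  simp [PiLp.proj_apply, EuclideanSpace.single_apply]

lemma projj_single (j : Fin 3) :
    (EuclideanSpace.proj j : E3 →L[ℝ] ℝ) (EuclideanSpace.single j 1) = (1:ℝ) := by
  simp [PiLp.proj_apply, EuclideanSpace.single_apply]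

lemma DM_apply (j : Fin 3) (h : 0 < MM c b ξ) :
    DM c b ξ (EuclideanSpace.single j 1)
      = c * (if (0:Fin 3) = j then (1:ℝ) else 0) + c * tt c b j ξ / RR c b ξ := by
  simp only [DM, ContinuousLinearMap.add_apply, ContinuousLinearMap.smul_apply,
    smul_eq_mul, DR_apply c b ξ j h, proj0_single]

lemma DG_apply (j : Fin 3) (h : 0 < MM c b ξ) :
    DG c b ξ (EuclideanSpace.single j 1)
      = tt c b 0 ξ * ((MM c b ξ)⁻¹ * (c * (if (0:Fin 3) = j then (1:ℝ) else 0)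
          + c * tt c b j ξ / RR c b ξ))
        + Real.log (MM c b ξ) * (c * (if (0:Fin 3) = j then (1:ℝ) else 0))
        - c * tt c b j ξ / RR c b ξ := by
  simp only [DG, ContinuousLinearMap.sub_apply, ContinuousLinearMap.add_apply,
    ContinuousLinearMap.smul_apply, smul_eq_mul, DM_apply c b ξ j h, proj0_single,
    DR_apply c b ξ j h]

lemma DG_eval0 (h : 0 < MM c b ξ) :
    DG c b ξ (EuclideanSpace.single 0 1) = c * Real.log (MM c b ξ) := by
  have hR := (R_pos c b ξ h).ne'
  have hM := h.ne'
  have hMdef : MM c b ξ = tt c b 0 ξ + RR c b ξ := rfl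
  rw [DG_apply c b ξ 0 h, if_pos rfl]
  rw [hMdef] at hM ⊢
  field_simp
  ring

lemma DG_evalj (j : Fin 3) (hj : (0:Fin 3) ≠ j) (h : 0 < MM c b ξ) :
    DG c b ξ (EuclideanSpace.single j 1) = -(c * tt c b j ξ) * (MM c b ξ)⁻¹ := by
  have hR := (R_pos c b ξ h).ne'
  have hM := h.ne'
  have hMdef : MM c b ξ = tt c b 0 ξ + RR c b ξ := rfl
  rw [DG_apply c b ξ j h, if_neg hj]
  rw [hMdef] at hM ⊢
  field_simp
  ring

lemma isOpen_U : IsOpen {ξ : E3 | 0 < MM c b ξ} := by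
  have ht : Continuous (tt c b 0) :=
    continuous_const.add (continuous_const.mul (EuclideanSpace.proj (𝕜 := ℝ) 0).continuous)
  have hQ : Continuous (QQ c b) := by
    apply continuous_finset_sum
    intro i _
    exact (continuous_const.add
      (continuous_const.mul (EuclideanSpace.proj (𝕜 := ℝ) i).continuous)).pow 2
  have hM : Continuous (MM c b) := ht.add (Real.continuous_sqrt.comp hQ)
  exact isOpen_lt continuous_const hM

lemma contDiffAt_G (h : 0 < MM c b ξ) : ContDiffAt ℝ 2 (GG c b) ξ := by
  have hct : ∀ i, ContDiff ℝ 2 (tt c b i) := fun i =>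
    contDiff_const.add (contDiff_const.mul (EuclideanSpace.proj (𝕜 := ℝ) i).contDiff)
  have hcQ : ContDiff ℝ 2 (QQ c b) := ContDiff.sum fun i _ => (hct i).pow 2
  have hcR : ContDiffAt ℝ 2 (RR c b) ξ :=
    (Real.contDiffAt_sqrt (Q_pos c b ξ h).ne').comp ξ hcQ.contDiffAt
  have hcM : ContDiffAt ℝ 2 (MM c b) ξ := ((hct 0).contDiffAt).add hcR
  have hclog : ContDiffAt ℝ 2 (fun y => Real.log (MM c b y)) ξ :=
    (Real.contDiffAt_log.mpr h.ne').comp ξ hcM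
  exact (((hct 0).contDiffAt).mul hclog).sub hcR

lemma alg (cc R t0 s1 s2 : ℝ) (hR : R ≠ 0) (hM : t0 + R ≠ 0)
    (hsq : R ^ 2 = t0 ^ 2 + s1 ^ 2 + s2 ^ 2) :
    cc * ((t0 + R)⁻¹ * (cc * 1 + cc * t0 / R))
    + (-(cc * s1) * (-((t0 + R) ^ 2)⁻¹ * (cc * s1 / R)) + (t0 + R)⁻¹ * (-(cc * cc)))
    + (-(cc * s2) * (-((t0 + R) ^ 2)⁻¹ * (cc * s2 / R)) + (t0 + R)⁻¹ * (-(cc * cc))) = 0 := by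
  have e1 : cc * ((t0 + R)⁻¹ * (cc * 1 + cc * t0 / R)) = cc ^ 2 / R := by
    field_simp; ring
  have e2 : ∀ s : ℝ, -(cc * s) * (-((t0 + R) ^ 2)⁻¹ * (cc * s / R)) + (t0 + R)⁻¹ * (-(cc * cc))
      = cc ^ 2 * s ^ 2 / ((t0 + R) ^ 2 * R) - cc ^ 2 / (t0 + R) := by
    intro s; field_simp; ring
  rw [e1, e2, e2]
  have hs12 : s1 ^ 2 = R ^ 2 - t0 ^ 2 - s2 ^ 2 := by linarith
  rw [hs12]
  field_simp
  ring

lemma laplacian_zero (h : 0 < MM c b ξ) : laplacian3 (GG c b) ξ = 0 := by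
  have hmem : {y : E3 | 0 < MM c b y} ∈ nhds ξ := (isOpen_U c b).mem_nhds h
  have hR0 := R_pos c b ξ h
  have hRne := hR0.ne'
  have hMne := h.ne'
  have hMdef : MM c b ξ = tt c b 0 ξ + RR c b ξ := rfl
  have hsq : RR c b ξ ^ 2 = tt c b 0 ξ ^ 2 + tt c b 1 ξ ^ 2 + tt c b 2 ξ ^ 2 := by
    rw [RR, Real.sq_sqrt (Q_pos c b ξ h).le, QQ, Fin.sum_univ_three]
  -- second derivative in direction 0
  have hev0 : (fun y => fderiv ℝ (GG c b) y (EuclideanSpace.single 0 1))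
      =ᶠ[nhds ξ] (fun y => c * Real.log (MM c b y)) := by
    filter_upwards [hmem] with y hy
    rw [(hasFDerivAt_G c b y hy).fderiv, DG_eval0 c b y hy]
  have hd0 : fderiv ℝ (fun y => fderiv ℝ (GG c b) y (EuclideanSpace.single 0 1)) ξ
      (EuclideanSpace.single 0 1)
      = c * ((MM c b ξ)⁻¹ * (c * 1 + c * tt c b 0 ξ / RR c b ξ)) := by
    rw [hev0.fderiv_eq, ((hasFDerivAt_logM c b ξ h).const_mul c).fderiv]
    simp only [ContinuousLinearMap.smul_apply, smul_eq_mul, DM_apply c b ξ 0 h]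
    norm_num
  -- second derivatives in directions 1 and 2
  have hgen : ∀ j : Fin 3, (0:Fin 3) ≠ j →
      fderiv ℝ (fun y => fderiv ℝ (GG c b) y (EuclideanSpace.single j 1)) ξ
        (EuclideanSpace.single j 1)
      = -(c * tt c b j ξ) * (-((MM c b ξ) ^ 2)⁻¹ * (c * tt c b j ξ / RR c b ξ))
        + (MM c b ξ)⁻¹ * (-(c * c)) := by
    intro j hj
    have hev : (fun y => fderiv ℝ (GG c b) y (EuclideanSpace.single j 1))
        =ᶠ[nhds ξ] (fun y => -(c * tt c b j y) * (MM c b y)⁻¹) := by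
      filter_upwards [hmem] with y hy
      rw [(hasFDerivAt_G c b y hy).fderiv, DG_evalj c b y j hj hy]
    have hN : HasFDerivAt (fun y => -(c * tt c b j y))
        (-(c • (c • (EuclideanSpace.proj j : E3 →L[ℝ] ℝ)))) ξ :=
      ((hasFDerivAt_t c b ξ j).const_mul c).neg
    have hInv : HasFDerivAt (fun y => (MM c b y)⁻¹)
        ((-((MM c b ξ) ^ 2)⁻¹) • DM c b ξ) ξ :=
      (hasDerivAt_inv hMne).comp_hasFDerivAt ξ (hasFDerivAt_M c b ξ h)
    rw [hev.fderiv_eq, (hN.fun_mul hInv).fderiv]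
    simp only [ContinuousLinearMap.add_apply, ContinuousLinearMap.smul_apply,
      ContinuousLinearMap.neg_apply, smul_eq_mul, DM_apply c b ξ j h, if_neg hj,
      projj_single]
    ring
  have hd1 := hgen 1 (by decide)
  have hd2 := hgen 2 (by decide)
  rw [laplacian3, Fin.sum_univ_three, hd0, hd1, hd2]
  rw [hMdef] at hMne ⊢
  exact alg c (RR c b ξ) (tt c b 0 ξ) (tt c b 1 ξ) (tt c b 2 ξ) hRne hMne hsq

lemma key : HarmonicOn3 (GG c b) {ξ : E3 | 0 < MM c b ξ} :=
  ⟨fun ξ hξ => (contDiffAt_G c b ξ hξ).contDiffWithinAt,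
   fun ξ hξ => laplacian_zero c b ξ hξ⟩

end FB
end

/-- The building block `F = s₁ ln(s₁+r) − r` of the potential (33) associated to a
codimension-3 flat `Hₖ` in `ℝ³⊗ℝⁿ ≅ (ℝⁿ)³` is polyharmonic: its restriction to any
affine subspace `a + ℝ³⊗ℝv` is harmonic where defined. -/
theorem flat_block_polyharmonic
    (n : ℕ) (hn : 1 ≤ n) (u : EuclideanSpace ℝ (Fin n)) (lam : Fin 3 → ℝ)
    (s : Fin 3 → (Fin 3 → EuclideanSpace ℝ (Fin n)) → ℝ)
    (hs : ∀ i x, s i x = (inner ℝ (x i) u : ℝ) - lam i)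
    (r : (Fin 3 → EuclideanSpace ℝ (Fin n)) → ℝ)
    (hr : ∀ x, r x = Real.sqrt (∑ i : Fin 3, (s i x) ^ 2))
    (F : (Fin 3 → EuclideanSpace ℝ (Fin n)) → ℝ)
    (hF : ∀ x, F x = s 0 x * Real.log (s 0 x + r x) - r x)
    (a : Fin 3 → EuclideanSpace ℝ (Fin n)) (v : EuclideanSpace ℝ (Fin n)) :
    HarmonicOn3 (fun ξ : EuclideanSpace ℝ (Fin 3) => F (fun i => a i + ξ i • v))
      {ξ : EuclideanSpace ℝ (Fin 3) |
        0 < s 0 (fun i => a i + ξ i • v) + r (fun i => a i + ξ i • v)} := by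
  classical
  set c : ℝ := (inner ℝ v u : ℝ) with hc
  set bb : Fin 3 → ℝ := fun i => (inner ℝ (a i) u : ℝ) - lam i with hbb
  have hsx : ∀ (ξ : EuclideanSpace ℝ (Fin 3)) (i : Fin 3),
      s i (fun i => a i + ξ i • v) = FB.tt c bb i ξ := by
    intro ξ i
    rw [hs]
    simp only [FB.tt, hbb, hc, inner_add_left, real_inner_smul_left]
    ring
  have hrx : ∀ ξ : EuclideanSpace ℝ (Fin 3), r (fun i => a i + ξ i • v) = FB.RR c bb ξ := by
    intro ξ
    rw [hr]
    simp only [hsx]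
    rfl
  have hFx : (fun ξ : EuclideanSpace ℝ (Fin 3) => F (fun i => a i + ξ i • v)) = FB.GG c bb := by
    funext ξ
    rw [hF, hrx ξ, hsx ξ 0]
    rfl
  have hset : {ξ : EuclideanSpace ℝ (Fin 3) |
        0 < s 0 (fun i => a i + ξ i • v) + r (fun i => a i + ξ i • v)}
      = {ξ : EuclideanSpace ℝ (Fin 3) | 0 < FB.MM c bb ξ} := by
    ext ξ
    simp only [Set.mem_setOf_eq, hsx ξ 0, hrx ξ]
    rfl
  rw [hFx, hset]
  exact FB.key c bb
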